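/- The forward (outgoing) transition dual update monotonically increases the dual function: let u ∈ V_det with In(u) and Out(u) nonempty and let λ ∈ Λ. Let x* be a minimizer of ⟨θ^λ_u, ·⟩ over {x ∈ X_u : x_det = 1}, let y* be a minimizer of ⟨θ^λ_u, ·⟩ over {x ∈ X_u : x_det = 1, x_in ≠ x*_in, x_out ≠ x*_out}, and set B_out = min{0, ½[⟨θ^λ_u, x*⟩ + ⟨θ^λ_u, (1, x*_in, y*_out)⟩]} (the state (1, x*_in, y*_out) lies in X_u). Define the update μ ∈ Λ by: μ(e) = min{⟨θ^λ_u, x⟩ : x ∈ X_u, x_out(e) = 1} − B_out for every move edge e ∈ Out(u); μ_v(e) = μ_w(e) = ½[ min{⟨θ^λ_u, x⟩ : x ∈ X_u, x_out(e) = 1} − B_out ] for every division edge e = u→(v,w) ∈ Out(u); all other components of μ are zero. Then D(λ) ≤ D(λ + μ). -/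

import Mathlib

open Finset

/-- Transition edges: a move `u→v` is `Sum.inl (u, v)`, a division `u→(v, w)` is
`Sum.inr (u, v, w)`. -/
abbrev Edge (Vdet : Type*) := (Vdet × Vdet) ⊕ (Vdet × Vdet × Vdet)

/-- A detection state `(x_det, x_in, x_out)`: the activation flag is a `Bool`, and each
`{0,1}`-vector is identified with the finite set of coordinates equal to `1`. -/
abbrev DetS (Vdet : Type*) := Bool × Finset (Edge Vdet) × Finset (Edge Vdet)

/-- A tracking decomposition: detection nodes `Vdet`, conflict nodes `Vconf`,
move edges (with distinct endpoints), division edges (with pairwise distinct nodes)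
and conflict edges. -/
structure Tracking (Vdet Vconf : Type*) [Fintype Vdet] [DecidableEq Vdet]
    [Fintype Vconf] [DecidableEq Vconf] where
  Emove : Finset (Vdet × Vdet)
  Ediv : Finset (Vdet × Vdet × Vdet)
  Econf : Finset (Vdet × Vconf)
  move_ne : ∀ e ∈ Emove, e.1 ≠ e.2
  div_ne : ∀ e ∈ Ediv, e.1 ≠ e.2.1 ∧ e.1 ≠ e.2.2 ∧ e.2.1 ≠ e.2.2

/-- A cost vector `θ`. -/
structure Cost (Vdet Vconf : Type*) where
  det : Vdet → ℝ
  inn : Vdet → Edge Vdet → ℝ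
  out : Vdet → Edge Vdet → ℝ
  conf : Vconf → Vdet → ℝ

/-- A reparametrization `λ ∈ Λ`: one real per move edge, a pair of reals
`(λ_v(e), λ_w(e))` per division edge `e = u→(v,w)`, and one real per conflict edge. -/
abbrev Repa (Vdet Vconf : Type*) : Type _ :=
  ((Vdet × Vdet) → ℝ) × ((Vdet × Vdet × Vdet) → ℝ × ℝ) × ((Vdet × Vconf) → ℝ)

variable {Vdet Vconf : Type*} [Fintype Vdet] [DecidableEq Vdet]
  [Fintype Vconf] [DecidableEq Vconf]

namespace Tracking

variable (T : Tracking Vdet Vconf)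

/-- The set `In(u)` of incoming transition edges of a detection node `u`. -/
def In (u : Vdet) : Finset (Edge Vdet) :=
  (T.Emove.filter (fun m => m.2 = u)).image Sum.inl ∪
    (T.Ediv.filter (fun d => d.2.1 = u ∨ d.2.2 = u)).image Sum.inr

/-- The set `Out(u)` of outgoing transition edges of a detection node `u`. -/
def Out (u : Vdet) : Finset (Edge Vdet) :=
  (T.Emove.filter (fun m => m.1 = u)).image Sum.inl ∪
    (T.Ediv.filter (fun d => d.1 = u)).image Sum.inr

/-- The set `conf(u)` of conflict edges incident to a detection node `u`. -/
def confSet (u : Vdet) : Finset (Vdet × Vconf) := T.Econf.filter (fun e => e.1 = u)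

/-- The detection nodes `u ∈ c` of a conflict node `c`. -/
def membersOf (c : Vconf) : Finset Vdet := Finset.univ.filter (fun v => (v, c) ∈ T.Econf)

/-- The state space `X_u` of a detection node. -/
def XDet (u : Vdet) : Finset (DetS Vdet) :=
  Finset.univ.filter (fun s =>
    s.2.1 ⊆ T.In u ∧ s.2.2 ⊆ T.Out u ∧
    s.2.1.card ≤ (if s.1 then 1 else 0) ∧ s.2.2.card ≤ (if s.1 then 1 else 0))

lemma zero_mem_XDet (u : Vdet) : ((false, ∅, ∅) : DetS Vdet) ∈ T.XDet u := by
  simp [XDet]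

lemma XDet_nonempty (u : Vdet) : (T.XDet u).Nonempty := ⟨_, T.zero_mem_XDet u⟩

/-- The state space `X_c` of a conflict node. -/
def XConf (c : Vconf) : Finset (Finset Vdet) :=
  Finset.univ.filter (fun s => (∀ v ∈ s, (v, c) ∈ T.Econf) ∧ s.card ≤ 1)

lemma empty_mem_XConf (c : Vconf) : (∅ : Finset Vdet) ∈ T.XConf c := by
  simp [XConf]

lemma XConf_nonempty (c : Vconf) : (T.XConf c).Nonempty := ⟨_, T.empty_mem_XConf c⟩

end Tracking

/-- The cost `⟨θ_u, x_u⟩` of a detection state. -/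
def detCost (θ : Cost Vdet Vconf) (u : Vdet) (s : DetS Vdet) : ℝ :=
  (if s.1 then θ.det u else 0) + ∑ e ∈ s.2.1, θ.inn u e + ∑ e ∈ s.2.2, θ.out u e

/-- The cost `⟨θ_c, x_c⟩` of a conflict state. -/
def confCost (θ : Cost Vdet Vconf) (c : Vconf) (s : Finset Vdet) : ℝ :=
  ∑ v ∈ s, θ.conf c v

/-- The energy `E(θ, x)`. -/
def energy (θ : Cost Vdet Vconf) (x : Vdet → DetS Vdet) (y : Vconf → Finset Vdet) : ℝ :=
  ∑ u, detCost θ u (x u) + ∑ c, confCost θ c (y c)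

namespace Tracking

variable (T : Tracking Vdet Vconf)

/-- The coupling constraints relating the states of the nodes. -/
def Coupled (x : Vdet → DetS Vdet) (y : Vconf → Finset Vdet) : Prop :=
  (∀ m ∈ T.Emove, (Sum.inl m ∈ (x m.1).2.2 ↔ Sum.inl m ∈ (x m.2).2.1)) ∧
  (∀ d ∈ T.Ediv, (Sum.inr d ∈ (x d.1).2.2 ↔ Sum.inr d ∈ (x d.2.1).2.1) ∧
      (Sum.inr d ∈ (x d.1).2.2 ↔ Sum.inr d ∈ (x d.2.2).2.1)) ∧
  (∀ e ∈ T.Econf, ((x e.1).1 = true ↔ e.1 ∈ y e.2))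

/-- A feasible assignment `x ∈ X`: valid local states satisfying all coupling constraints. -/
def Feasible (x : Vdet → DetS Vdet) (y : Vconf → Finset Vdet) : Prop :=
  (∀ u, x u ∈ T.XDet u) ∧ (∀ c, y c ∈ T.XConf c) ∧ T.Coupled x y

/-- The reparametrized costs `θ^λ`. -/
def repaCost (θ : Cost Vdet Vconf) (l : Repa Vdet Vconf) : Cost Vdet Vconf where
  det u := θ.det u - ∑ e ∈ T.confSet u, l.2.2 e
  inn u e := θ.inn u e +
    (match e with
      | Sum.inl m => l.1 m
      | Sum.inr d =>
          (if d.2.1 = u then (l.2.1 d).1 else 0) + (if d.2.2 = u then (l.2.1 d).2 else 0))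
  out u e := θ.out u e -
    (match e with
      | Sum.inl m => l.1 m
      | Sum.inr d => (l.2.1 d).1 + (l.2.1 d).2)
  conf c u := θ.conf c u + l.2.2 (u, c)

/-- The dual function `D(λ)`. -/
def D (θ : Cost Vdet Vconf) (l : Repa Vdet Vconf) : ℝ :=
  ∑ u, (T.XDet u).inf' (T.XDet_nonempty u) (detCost (T.repaCost θ l) u) +
    ∑ c, (T.XConf c).inf' (T.XConf_nonempty c) (confCost (T.repaCost θ l) c)

/-- The states of `X_u` with active detection variable, `{x ∈ X_u : x_det = 1}`. -/
def XDet1 (u : Vdet) : Finset (DetS Vdet) := (T.XDet u).filter (fun s => s.1 = true)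

lemma one_mem_XDet1 (u : Vdet) : ((true, ∅, ∅) : DetS Vdet) ∈ T.XDet1 u := by
  simp [XDet1, XDet]

lemma XDet1_nonempty (u : Vdet) : (T.XDet1 u).Nonempty := ⟨_, T.one_mem_XDet1 u⟩

/-- The states of `X_u` with a given active outgoing edge, `{x ∈ X_u : x_out(e) = 1}`. -/
def XDetOut (u : Vdet) (e : Edge Vdet) : Finset (DetS Vdet) :=
  (T.XDet u).filter (fun s => e ∈ s.2.2)

lemma XDetOut_nonempty (u : Vdet) (e : Edge Vdet) (he : e ∈ T.Out u) :
    (T.XDetOut u e).Nonempty :=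
  ⟨(true, ∅, {e}), by simp [XDetOut, XDet, Finset.singleton_subset_iff, he]⟩

/-- The states of `X_u` with a given active incoming edge, `{x ∈ X_u : x_in(e) = 1}`. -/
def XDetIn (u : Vdet) (e : Edge Vdet) : Finset (DetS Vdet) :=
  (T.XDet u).filter (fun s => e ∈ s.2.1)

lemma XDetIn_nonempty (u : Vdet) (e : Edge Vdet) (he : e ∈ T.In u) :
    (T.XDetIn u e).Nonempty :=
  ⟨(true, {e}, ∅), by simp [XDetIn, XDet, Finset.singleton_subset_iff, he]⟩

/-- `min{⟨θ_u, x⟩ : x ∈ X_u, x_out(e) = 1}` (by convention `0` if `e ∉ Out(u)`). -/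
def minOutOn (θ : Cost Vdet Vconf) (u : Vdet) (e : Edge Vdet) : ℝ :=
  if h : e ∈ T.Out u then (T.XDetOut u e).inf' (T.XDetOut_nonempty u e h) (detCost θ u) else 0

/-- `min{⟨θ_u, x⟩ : x ∈ X_u, x_in(e) = 1}` (by convention `0` if `e ∉ In(u)`). -/
def minInOn (θ : Cost Vdet Vconf) (u : Vdet) (e : Edge Vdet) : ℝ :=
  if h : e ∈ T.In u then (T.XDetIn u e).inf' (T.XDetIn_nonempty u e h) (detCost θ u) else 0

end Tracking

section Aux

variable {Vdet Vconf : Type*} [Fintype Vdet] [DecidableEq Vdet]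
  [Fintype Vconf] [DecidableEq Vconf]

lemma aux_card_cases {α : Type*} (s : Finset α) (h : s.card ≤ 1) :
    s = ∅ ∨ ∃ a, s = {a} := by
  rcases s.eq_empty_or_nonempty with h0 | h1
  · exact Or.inl h0
  · exact Or.inr (Finset.card_eq_one.mp (le_antisymm h (Finset.one_le_card.mpr h1)))

variable (T : Tracking Vdet Vconf)

lemma aux_inl_mem_Out {m : Vdet × Vdet} {u : Vdet} :
    Sum.inl m ∈ T.Out u ↔ m ∈ T.Emove ∧ m.1 = u := by
  simp [Tracking.Out, and_comm]

lemma aux_inr_mem_Out {d : Vdet × Vdet × Vdet} {u : Vdet} :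
    Sum.inr d ∈ T.Out u ↔ d ∈ T.Ediv ∧ d.1 = u := by
  simp [Tracking.Out, and_comm]

lemma aux_inl_mem_In {m : Vdet × Vdet} {u : Vdet} :
    Sum.inl m ∈ T.In u ↔ m ∈ T.Emove ∧ m.2 = u := by
  simp [Tracking.In, and_comm]

lemma aux_inr_mem_In {d : Vdet × Vdet × Vdet} {u : Vdet} :
    Sum.inr d ∈ T.In u ↔ d ∈ T.Ediv ∧ (d.2.1 = u ∨ d.2.2 = u) := by
  simp [Tracking.In, and_comm]

lemma aux_mem_XDet {x : DetS Vdet} {u : Vdet} :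
    x ∈ T.XDet u ↔ x.2.1 ⊆ T.In u ∧ x.2.2 ⊆ T.Out u ∧
      x.2.1.card ≤ (if x.1 then 1 else 0) ∧ x.2.2.card ≤ (if x.1 then 1 else 0) := by
  simp [Tracking.XDet]

lemma aux_mem_XDet_true {A O : Finset (Edge Vdet)} {u : Vdet}
    (hA : A ⊆ T.In u) (hO : O ⊆ T.Out u) (hcA : A.card ≤ 1) (hcO : O.card ≤ 1) :
    ((true, A, O) : DetS Vdet) ∈ T.XDet u := by
  rw [aux_mem_XDet]
  exact ⟨hA, hO, by simpa using hcA, by simpa using hcO⟩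

lemma aux_detCost_true (θ : Cost Vdet Vconf) (u : Vdet) (A O : Finset (Edge Vdet)) :
    detCost θ u (true, A, O) = θ.det u + ∑ e ∈ A, θ.inn u e + ∑ e ∈ O, θ.out u e := by
  simp [detCost]

end Aux
set_option linter.unusedSectionVars false

section Aux2

variable {Vdet Vconf : Type*} [Fintype Vdet] [DecidableEq Vdet]
  [Fintype Vconf] [DecidableEq Vconf]

/-- The change of the outgoing cost at the source node, caused by a reparametrization. -/
def muOut (μ : Repa Vdet Vconf) : Edge Vdet → ℝ
  | Sum.inl m => μ.1 m
  | Sum.inr d => (μ.2.1 d).1 + (μ.2.1 d).2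

/-- The change of the incoming cost at node `a`, caused by a reparametrization. -/
def muInn (μ : Repa Vdet Vconf) (a : Vdet) : Edge Vdet → ℝ
  | Sum.inl m => μ.1 m
  | Sum.inr d => (if d.2.1 = a then (μ.2.1 d).1 else 0) + (if d.2.2 = a then (μ.2.1 d).2 else 0)

variable (T : Tracking Vdet Vconf)

lemma aux_repa_det (θ : Cost Vdet Vconf) (l μ : Repa Vdet Vconf) (hμconf : μ.2.2 = 0)
    (a : Vdet) : (T.repaCost θ (l + μ)).det a = (T.repaCost θ l).det a := by
  simp [Tracking.repaCost, Prod.snd_add, hμconf]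

lemma aux_repa_conf (θ : Cost Vdet Vconf) (l μ : Repa Vdet Vconf) (hμconf : μ.2.2 = 0)
    (c : Vconf) (a : Vdet) :
    (T.repaCost θ (l + μ)).conf c a = (T.repaCost θ l).conf c a := by
  simp [Tracking.repaCost, Prod.snd_add, hμconf]

lemma aux_repa_inn (θ : Cost Vdet Vconf) (l μ : Repa Vdet Vconf) (a : Vdet) (e : Edge Vdet) :
    (T.repaCost θ (l + μ)).inn a e = (T.repaCost θ l).inn a e + muInn μ a e := by
  cases e with
  | inl m =>
      simp only [Tracking.repaCost, muInn, Prod.fst_add, Pi.add_apply]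
      ring
  | inr d =>
      simp only [Tracking.repaCost, muInn, Prod.snd_add, Prod.fst_add, Pi.add_apply]
      split_ifs <;> ring

lemma aux_repa_out (θ : Cost Vdet Vconf) (l μ : Repa Vdet Vconf) (a : Vdet) (e : Edge Vdet) :
    (T.repaCost θ (l + μ)).out a e = (T.repaCost θ l).out a e - muOut μ e := by
  cases e with
  | inl m =>
      simp only [Tracking.repaCost, muOut, Prod.fst_add, Pi.add_apply]
      ring
  | inr d =>
      simp only [Tracking.repaCost, muOut, Prod.snd_add, Prod.fst_add, Pi.add_apply]
      ring

lemma aux_detCost_add (θ : Cost Vdet Vconf) (l μ : Repa Vdet Vconf) (hμconf : μ.2.2 = 0)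
    (a : Vdet) (x : DetS Vdet) :
    detCost (T.repaCost θ (l + μ)) a x =
      detCost (T.repaCost θ l) a x + (∑ e ∈ x.2.1, muInn μ a e) - (∑ e ∈ x.2.2, muOut μ e) := by
  unfold detCost
  rw [aux_repa_det T θ l μ hμconf a]
  rw [Finset.sum_congr rfl (fun e _ => aux_repa_inn T θ l μ a e),
    Finset.sum_congr rfl (fun e _ => aux_repa_out T θ l μ a e),
    Finset.sum_add_distrib, Finset.sum_sub_distrib]
  ring

end Aux2
set_option linter.unusedSectionVars false

section Aux3

variable {Vdet Vconf : Type*} [Fintype Vdet] [DecidableEq Vdet]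
  [Fintype Vconf] [DecidableEq Vconf]

variable (T : Tracking Vdet Vconf)

lemma aux_target_bound (θ1 θ2 : Cost Vdet Vconf) (a : Vdet) (c : ℝ) (hc : c ≤ 0)
    (hdet : θ2.det a = θ1.det a)
    (hout : ∀ e ∈ T.Out a, θ2.out a e = θ1.out a e)
    (hinn : ∀ e ∈ T.In a, θ1.inn a e + c ≤ θ2.inn a e) :
    (T.XDet a).inf' (T.XDet_nonempty a) (detCost θ1 a) + c ≤
      (T.XDet a).inf' (T.XDet_nonempty a) (detCost θ2 a) := by
  apply Finset.le_inf'
  intro x hx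
  obtain ⟨hxin, hxout, hcin, _⟩ := (aux_mem_XDet T).mp hx
  have h1 : (T.XDet a).inf' (T.XDet_nonempty a) (detCost θ1 a) ≤ detCost θ1 a x :=
    Finset.inf'_le _ hx
  have hsum_out : ∑ e ∈ x.2.2, θ2.out a e = ∑ e ∈ x.2.2, θ1.out a e :=
    Finset.sum_congr rfl fun e he => hout e (hxout he)
  have hcard : x.2.1.card ≤ 1 := le_trans hcin (by split <;> omega)
  have hsum_in : ∑ e ∈ x.2.1, θ1.inn a e + c ≤ ∑ e ∈ x.2.1, θ2.inn a e := by
    rcases aux_card_cases x.2.1 hcard with h0 | ⟨e, he⟩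
    · rw [h0]; simpa using hc
    · rw [he]
      simpa using hinn e (hxin (by rw [he]; exact Finset.mem_singleton_self e))
  have e1 : detCost θ1 a x = (if x.1 then θ1.det a else 0) + ∑ e ∈ x.2.1, θ1.inn a e
      + ∑ e ∈ x.2.2, θ1.out a e := rfl
  have e2 : detCost θ2 a x = (if x.1 then θ2.det a else 0) + ∑ e ∈ x.2.1, θ2.inn a e
      + ∑ e ∈ x.2.2, θ2.out a e := rfl
  rw [e1] at h1
  rw [e2, hdet, hsum_out]
  linarith

end Aux3
/-- The forward (outgoing) transition dual update monotonically increases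
the dual function: with `x*` a minimizer over `{x ∈ X_u : x_det = 1}`, `y*` a minimizer over
`{x ∈ X_u : x_det = 1, x_in ≠ x*_in, x_out ≠ x*_out}`,
`B_out = min{0, ½[⟨θ^λ_u, x*⟩ + ⟨θ^λ_u, (1, x*_in, y*_out)⟩]}` (the state `(1, x*_in, y*_out)`
lies in `X_u`), and `μ` defined on the outgoing edges of `u` as stated (all other components
zero), we have `D(λ) ≤ D(λ + μ)`. -/
theorem forward_transition_update_monotone {Vdet Vconf : Type*} [Fintype Vdet]
    [DecidableEq Vdet] [Fintype Vconf] [DecidableEq Vconf] (T : Tracking Vdet Vconf)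
    (θ : Cost Vdet Vconf) (l : Repa Vdet Vconf) (u : Vdet)
    (hIn : (T.In u).Nonempty) (hOut : (T.Out u).Nonempty)
    (xs ys : DetS Vdet)
    (hxs : xs ∈ T.XDet1 u)
    (hxs_min : ∀ s ∈ T.XDet1 u,
      detCost (T.repaCost θ l) u xs ≤ detCost (T.repaCost θ l) u s)
    (hys : ys ∈ T.XDet1 u) (hys_in : ys.2.1 ≠ xs.2.1) (hys_out : ys.2.2 ≠ xs.2.2)
    (hys_min : ∀ s ∈ T.XDet1 u, s.2.1 ≠ xs.2.1 → s.2.2 ≠ xs.2.2 →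
      detCost (T.repaCost θ l) u ys ≤ detCost (T.repaCost θ l) u s)
    (Bout : ℝ)
    (hBout : Bout = min 0 ((detCost (T.repaCost θ l) u xs
      + detCost (T.repaCost θ l) u (true, xs.2.1, ys.2.2)) / 2))
    (μ : Repa Vdet Vconf)
    (hμconf : μ.2.2 = 0)
    (hμmove : ∀ m : Vdet × Vdet, μ.1 m =
      if Sum.inl m ∈ T.Out u then
        T.minOutOn (T.repaCost θ l) u (Sum.inl m) - Bout
      else 0)
    (hμdiv : ∀ d : Vdet × Vdet × Vdet, μ.2.1 d =
      if Sum.inr d ∈ T.Out u then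
        ((T.minOutOn (T.repaCost θ l) u (Sum.inr d) - Bout) / 2,
         (T.minOutOn (T.repaCost θ l) u (Sum.inr d) - Bout) / 2)
      else 0) :
    ((true, xs.2.1, ys.2.2) : DetS Vdet) ∈ T.XDet u ∧ T.D θ l ≤ T.D θ (l + μ) := by
  obtain ⟨xb, xA, xO⟩ := xs
  obtain ⟨yb, yA, yO⟩ := ys
  obtain ⟨hxX, rfl⟩ : (xb, xA, xO) ∈ T.XDet u ∧ xb = true := by
    simpa [Tracking.XDet1, Finset.mem_filter] using hxs
  obtain ⟨hyX, rfl⟩ : (yb, yA, yO) ∈ T.XDet u ∧ yb = true := by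
    simpa [Tracking.XDet1, Finset.mem_filter] using hys
  simp only at hys_in hys_out hxs_min hys_min hBout ⊢
  obtain ⟨hxA_sub, hxO_sub, hxA_card, hxO_card⟩ := (aux_mem_XDet T).mp hxX
  obtain ⟨hyA_sub, hyO_sub, hyA_card, hyO_card⟩ := (aux_mem_XDet T).mp hyX
  simp only [if_true] at hxA_card hxO_card hyA_card hyO_card
  refine ⟨aux_mem_XDet_true T hxA_sub hyO_sub hxA_card hyO_card, ?_⟩
  -- membership in XDet1
  have hmem1 : ∀ A O : Finset (Edge Vdet), A ⊆ T.In u → A.card ≤ 1 → O ⊆ T.Out u →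
      O.card ≤ 1 → ((true, A, O) : DetS Vdet) ∈ T.XDet1 u := by
    intro A O hA hcA hO hcO
    rw [Tracking.XDet1, Finset.mem_filter]
    exact ⟨aux_mem_XDet_true T hA hO hcA hcO, rfl⟩
  -- basic optimality inequalities
  have hImin : ∀ A : Finset (Edge Vdet), A ⊆ T.In u → A.card ≤ 1 →
      ∑ e ∈ xA, (T.repaCost θ l).inn u e ≤ ∑ e ∈ A, (T.repaCost θ l).inn u e := by
    intro A hA hcA
    have h := hxs_min (true, A, xO) (hmem1 A xO hA hcA hxO_sub hxO_card)
    rw [aux_detCost_true, aux_detCost_true] at h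
    linarith
  have hOmin : ∀ O : Finset (Edge Vdet), O ⊆ T.Out u → O.card ≤ 1 →
      ∑ e ∈ xO, (T.repaCost θ l).out u e ≤ ∑ e ∈ O, (T.repaCost θ l).out u e := by
    intro O hO hcO
    have h := hxs_min (true, xA, O) (hmem1 xA O hxA_sub hxA_card hO hcO)
    rw [aux_detCost_true, aux_detCost_true] at h
    linarith
  have hO2 : ∀ O : Finset (Edge Vdet), O ⊆ T.Out u → O.card ≤ 1 → O ≠ xO →
      ∑ e ∈ yO, (T.repaCost θ l).out u e ≤ ∑ e ∈ O, (T.repaCost θ l).out u e := by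
    intro O hO hcO hne
    have h := hys_min (true, yA, O) (hmem1 yA O hyA_sub hyA_card hO hcO) hys_in hne
    rw [aux_detCost_true, aux_detCost_true] at h
    linarith
  have hF1M : detCost (T.repaCost θ l) u (true, xA, xO)
      ≤ detCost (T.repaCost θ l) u (true, xA, yO) := by
    rw [aux_detCost_true, aux_detCost_true]
    have := hOmin yO hyO_sub hyO_card
    linarith
  have hB0 : Bout ≤ 0 := by rw [hBout]; exact min_le_left _ _
  have hBle : Bout ≤ (detCost (T.repaCost θ l) u (true, xA, xO)
      + detCost (T.repaCost θ l) u (true, xA, yO)) / 2 := by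
    rw [hBout]; exact min_le_right _ _
  have hBM : Bout ≤ detCost (T.repaCost θ l) u (true, xA, yO) := by linarith
  -- minOutOn bounds
  have hminOut_ge_F1 : ∀ e ∈ T.Out u,
      detCost (T.repaCost θ l) u (true, xA, xO) ≤ T.minOutOn (T.repaCost θ l) u e := by
    intro e he
    rw [Tracking.minOutOn, dif_pos he]
    apply Finset.le_inf'
    intro x hx
    rw [Tracking.XDetOut, Finset.mem_filter] at hx
    obtain ⟨hxm, hex⟩ := hx
    obtain ⟨-, -, -, hco⟩ := (aux_mem_XDet T).mp hxm
    have hpos : 0 < x.2.2.card := Finset.card_pos.mpr ⟨e, hex⟩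
    have hx1 : x.1 = true := by
      rcases Bool.eq_false_or_eq_true x.1 with h | h
      · exact h
      · rw [h] at hco; simp at hco; exact absurd hpos (by simp [hco])
    exact hxs_min x (by rw [Tracking.XDet1, Finset.mem_filter]; exact ⟨hxm, hx1⟩)
  have hminOut_ge_M : ∀ e ∈ T.Out u, {e} ≠ xO →
      detCost (T.repaCost θ l) u (true, xA, yO) ≤ T.minOutOn (T.repaCost θ l) u e := by
    intro e he hne
    rw [Tracking.minOutOn, dif_pos he]
    apply Finset.le_inf'
    intro x hx
    rw [Tracking.XDetOut, Finset.mem_filter] at hx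
    obtain ⟨hxm, hex⟩ := hx
    obtain ⟨hxi, hxo, hci, hco⟩ := (aux_mem_XDet T).mp hxm
    have hpos : 0 < x.2.2.card := Finset.card_pos.mpr ⟨e, hex⟩
    have hx1 : x.1 = true := by
      rcases Bool.eq_false_or_eq_true x.1 with h | h
      · exact h
      · rw [h] at hco; simp at hco; exact absurd hpos (by simp [hco])
    rw [hx1] at hci hco
    simp only [if_true] at hci hco
    have hxx : x.2.2 = {e} := by
      apply Finset.Subset.antisymm _ (Finset.singleton_subset_iff.mpr hex)
      intro a ha
      have := Finset.card_le_one.mp hco a ha e hex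
      simp [this]
    have hdx : detCost (T.repaCost θ l) u x = (T.repaCost θ l).det u
        + ∑ e' ∈ x.2.1, (T.repaCost θ l).inn u e'
        + ∑ e' ∈ x.2.2, (T.repaCost θ l).out u e' := by
      unfold detCost; rw [hx1]; simp
    rw [hdx, hxx, Finset.sum_singleton, aux_detCost_true]
    have h1 := hImin x.2.1 hxi hci
    have h2 := hO2 {e} (Finset.singleton_subset_iff.mpr he) (by simp) hne
    rw [Finset.sum_singleton] at h2
    linarith
  have hδ0 : ∀ e ∈ T.Out u, {e} ≠ xO → 0 ≤ T.minOutOn (T.repaCost θ l) u e - Bout := by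
    intro e he hne
    have := hminOut_ge_M e he hne
    linarith
  set γ : ℝ := min 0 (detCost (T.repaCost θ l) u (true, xA, xO) - Bout) with hγdef
  have hγ0 : γ ≤ 0 := min_le_left _ _
  have hγF : γ ≤ detCost (T.repaCost θ l) u (true, xA, xO) - Bout := min_le_right _ _
  have hδγ : ∀ e ∈ T.Out u, γ ≤ T.minOutOn (T.repaCost θ l) u e - Bout := by
    intro e he
    have := hminOut_ge_F1 e he
    linarith
  -- values of muOut / muInn
  have hmuOut_u : ∀ e ∈ T.Out u, muOut μ e = T.minOutOn (T.repaCost θ l) u e - Bout := by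
    intro e he
    cases e with
    | inl m => simp only [muOut]; rw [hμmove m, if_pos he]
    | inr d => simp only [muOut]; rw [hμdiv d, if_pos he]; dsimp only; ring
  have hmuOut_ne : ∀ a : Vdet, a ≠ u → ∀ e ∈ T.Out a, muOut μ e = 0 := by
    intro a ha e he
    cases e with
    | inl m =>
        have hm : m.1 = a := ((aux_inl_mem_Out T).mp he).2
        simp only [muOut]
        rw [hμmove m, if_neg]
        intro hmem
        exact ha (by rw [← hm, ((aux_inl_mem_Out T).mp hmem).2])
    | inr d =>
        have hd : d.1 = a := ((aux_inr_mem_Out T).mp he).2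
        simp only [muOut]
        rw [hμdiv d, if_neg]
        · simp
        · intro hmem
          exact ha (by rw [← hd, ((aux_inr_mem_Out T).mp hmem).2])
  have hmuInn_u : ∀ e ∈ T.In u, muInn μ u e = 0 := by
    intro e he
    cases e with
    | inl m =>
        obtain ⟨hmE, hm2⟩ := (aux_inl_mem_In T).mp he
        simp only [muInn]
        rw [hμmove m, if_neg]
        intro hmem
        obtain ⟨hmE', hm1⟩ := (aux_inl_mem_Out T).mp hmem
        exact T.move_ne m hmE (hm1.trans hm2.symm)
    | inr d =>
        obtain ⟨hdE, hd2⟩ := (aux_inr_mem_In T).mp he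
        simp only [muInn]
        have hz : μ.2.1 d = 0 := by
          rw [hμdiv d, if_neg]
          intro hmem
          obtain ⟨hdE', hd1⟩ := (aux_inr_mem_Out T).mp hmem
          obtain ⟨h1, h2, -⟩ := T.div_ne d hdE
          rcases hd2 with h | h
          · exact h1 (hd1.trans h.symm)
          · exact h2 (hd1.trans h.symm)
        rw [hz]
        simp
  have hmuInn_ge0 : ∀ a : Vdet, ∀ e ∈ T.In a, {e} ≠ xO → 0 ≤ muInn μ a e := by
    intro a e he hne
    cases e with
    | inl m =>
        simp only [muInn]
        rw [hμmove m]
        split_ifs with h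
        · exact hδ0 _ h hne
        · exact le_refl 0
    | inr d =>
        simp only [muInn]
        by_cases hmem : Sum.inr d ∈ T.Out u
        · rw [hμdiv d, if_pos hmem]
          have := hδ0 _ hmem hne
          dsimp only
          split_ifs <;> linarith
        · rw [hμdiv d, if_neg hmem]
          simp
  have hmuInn_geγ : ∀ a : Vdet, ∀ e ∈ T.In a, γ ≤ muInn μ a e := by
    intro a e he
    cases e with
    | inl m =>
        simp only [muInn]
        rw [hμmove m]
        split_ifs with h
        · exact hδγ _ h
        · exact hγ0
    | inr d =>
        simp only [muInn]
        by_cases hmem : Sum.inr d ∈ T.Out u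
        · rw [hμdiv d, if_pos hmem]
          have := hδγ _ hmem
          dsimp only
          split_ifs <;> linarith
        · rw [hμdiv d, if_neg hmem]
          simp [hγ0]
  -- the old minimum at u
  have hold_le_F1 : (T.XDet u).inf' (T.XDet_nonempty u) (detCost (T.repaCost θ l) u)
      ≤ detCost (T.repaCost θ l) u (true, xA, xO) := Finset.inf'_le _ hxX
  have hold_le_0 : (T.XDet u).inf' (T.XDet_nonempty u) (detCost (T.repaCost θ l) u) ≤ 0 := by
    have := Finset.inf'_le (detCost (T.repaCost θ l) u) (T.zero_mem_XDet u)
    have h0 : detCost (T.repaCost θ l) u (false, ∅, ∅) = 0 := by simp [detCost]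
    linarith
  have hold_le_B : (T.XDet u).inf' (T.XDet_nonempty u) (detCost (T.repaCost θ l) u)
      ≤ Bout := by
    rw [hBout]
    rcases min_cases (0:ℝ) ((detCost (T.repaCost θ l) u (true, xA, xO)
      + detCost (T.repaCost θ l) u (true, xA, yO)) / 2) with ⟨heq, -⟩ | ⟨heq, -⟩ <;>
      rw [heq] <;> linarith
  -- the general bound at node u
  have hu_bound : ∀ g : ℝ,
      (T.XDet u).inf' (T.XDet_nonempty u) (detCost (T.repaCost θ l) u) - g ≤ Bout →
      (∀ A : Finset (Edge Vdet), A ⊆ T.In u → A.card ≤ 1 →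
        (T.XDet u).inf' (T.XDet_nonempty u) (detCost (T.repaCost θ l) u) - g ≤
          (T.repaCost θ l).det u + ∑ e ∈ A, (T.repaCost θ l).inn u e) →
      (T.XDet u).inf' (T.XDet_nonempty u) (detCost (T.repaCost θ l) u) - g ≤
        (T.XDet u).inf' (T.XDet_nonempty u) (detCost (T.repaCost θ (l + μ)) u) := by
    intro g hgB hgA
    apply Finset.le_inf'
    intro x hx
    obtain ⟨hxi, hxo, hci, hco⟩ := (aux_mem_XDet T).mp hx
    rw [aux_detCost_add T θ l μ hμconf u x]
    have hinn0 : ∑ e ∈ x.2.1, muInn μ u e = 0 :=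
      Finset.sum_eq_zero fun e he => hmuInn_u e (hxi he)
    rw [hinn0]
    have hco1 : x.2.2.card ≤ 1 := le_trans hco (by split <;> omega)
    rcases aux_card_cases x.2.2 hco1 with h0 | ⟨e, heq⟩
    · rw [h0]
      simp only [Finset.sum_empty]
      rcases Bool.eq_false_or_eq_true x.1 with hb | hb
      · have hdc : detCost (T.repaCost θ l) u x = (T.repaCost θ l).det u
            + ∑ e ∈ x.2.1, (T.repaCost θ l).inn u e := by
          unfold detCost; rw [hb, h0]; simp
        rw [hdc]
        have hci1 : x.2.1.card ≤ 1 := le_trans hci (by split <;> omega)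
        have := hgA x.2.1 hxi hci1
        linarith
      · have hA0 : x.2.1 = ∅ := by
          rw [hb] at hci
          simpa [Finset.card_eq_zero] using hci
        have hzero : detCost (T.repaCost θ l) u x = 0 := by
          unfold detCost; rw [hb, hA0, h0]; simp
        rw [hzero]
        linarith
    · rw [heq, Finset.sum_singleton]
      have he : e ∈ T.Out u := hxo (heq ▸ Finset.mem_singleton_self e)
      rw [hmuOut_u e he]
      have hxmem : x ∈ T.XDetOut u e := by
        rw [Tracking.XDetOut, Finset.mem_filter]
        exact ⟨hx, heq ▸ Finset.mem_singleton_self e⟩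
      have hmin_le : T.minOutOn (T.repaCost θ l) u e ≤ detCost (T.repaCost θ l) u x := by
        rw [Tracking.minOutOn, dif_pos he]
        exact Finset.inf'_le _ hxmem
      linarith
  -- reduce the dual inequality to the detection sums
  have hconf : confCost (T.repaCost θ (l + μ)) = confCost (T.repaCost θ l) := by
    funext c s
    unfold confCost
    exact Finset.sum_congr rfl fun v _ => aux_repa_conf T θ l μ hμconf c v
  rw [Tracking.D, Tracking.D, hconf]
  have hsum : ∑ a : Vdet, (T.XDet a).inf' (T.XDet_nonempty a) (detCost (T.repaCost θ l) a)
      ≤ ∑ a : Vdet, (T.XDet a).inf' (T.XDet_nonempty a) (detCost (T.repaCost θ (l + μ)) a) := by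
    rcases aux_card_cases xO hxO_card with hxO0 | ⟨estar, hxOeq⟩
    · -- Case `xO = ∅`: every term is monotone
      apply Finset.sum_le_sum
      intro a _
      by_cases ha : a = u
      · rw [ha]
        have hAb : ∀ A : Finset (Edge Vdet), A ⊆ T.In u → A.card ≤ 1 →
            (T.XDet u).inf' (T.XDet_nonempty u) (detCost (T.repaCost θ l) u) - 0 ≤
              (T.repaCost θ l).det u + ∑ e ∈ A, (T.repaCost θ l).inn u e := by
          intro A hA hcA
          have h2 := Finset.inf'_le (detCost (T.repaCost θ l) u)
            (aux_mem_XDet_true T hA (Finset.empty_subset _) hcA (by simp))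
          rw [aux_detCost_true] at h2
          simp only [Finset.sum_empty] at h2
          linarith
        have h := hu_bound 0 (by linarith) hAb
        linarith
      · have hb := aux_target_bound T (T.repaCost θ l) (T.repaCost θ (l + μ)) a 0 le_rfl
          (aux_repa_det T θ l μ hμconf a)
          (fun e he => by rw [aux_repa_out T θ l μ a e, hmuOut_ne a ha e he, sub_zero])
          (fun e he => by
            rw [aux_repa_inn T θ l μ a e]
            have := hmuInn_ge0 a e he (by rw [hxO0]; exact Finset.singleton_ne_empty e)
            linarith)
        linarith
    · -- Case `xO = {estar}`
      have hestar : estar ∈ T.Out u :=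
        hxO_sub (by rw [hxOeq]; exact Finset.mem_singleton_self _)
      have hOCx : ∑ e ∈ xO, (T.repaCost θ l).out u e ≤ 0 := by
        have := hOmin ∅ (Finset.empty_subset _) (by simp)
        simpa using this
      have hOCy : ∑ e ∈ yO, (T.repaCost θ l).out u e ≤ 0 := by
        have := hO2 ∅ (Finset.empty_subset _) (by simp)
          (by rw [hxOeq]; exact (Finset.singleton_ne_empty _).symm)
        simpa using this
      have hcore : Bout ≤ (T.repaCost θ l).det u + ∑ e ∈ xA, (T.repaCost θ l).inn u e := by
        rw [aux_detCost_true, aux_detCost_true] at hBle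
        linarith
      have hgB : (T.XDet u).inf' (T.XDet_nonempty u) (detCost (T.repaCost θ l) u) - γ
          ≤ Bout := by
        rcases min_cases (0:ℝ) (detCost (T.repaCost θ l) u (true, xA, xO) - Bout) with
          ⟨heq, -⟩ | ⟨heq, -⟩ <;> rw [hγdef, heq] <;> linarith
      have hAb : ∀ A : Finset (Edge Vdet), A ⊆ T.In u → A.card ≤ 1 →
          (T.XDet u).inf' (T.XDet_nonempty u) (detCost (T.repaCost θ l) u) - γ ≤
            (T.repaCost θ l).det u + ∑ e ∈ A, (T.repaCost θ l).inn u e := by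
        intro A hA hcA
        have := hImin A hA hcA
        linarith
      have hu2 := hu_bound γ hgB hAb
      rcases estar with m | dvw
      · -- a move edge `u → m.2`
        obtain ⟨hmE, hm1⟩ := (aux_inl_mem_Out T).mp hestar
        have htvu : m.2 ≠ u := fun h => T.move_ne m hmE (hm1.trans h.symm)
        have hpoint : ∀ a ∈ Finset.univ, (T.XDet a).inf' (T.XDet_nonempty a)
              (detCost (T.repaCost θ l) a)
            + ((if a = u then -γ else 0) + (if a = m.2 then γ else 0))
            ≤ (T.XDet a).inf' (T.XDet_nonempty a) (detCost (T.repaCost θ (l + μ)) a) := by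
          intro a _
          by_cases hau : a = u
          · rw [hau, if_pos rfl, if_neg (fun h : u = m.2 => htvu h.symm)]
            linarith
          · rw [if_neg hau]
            by_cases hat : a = m.2
            · rw [hat, if_pos rfl]
              have hb := aux_target_bound T (T.repaCost θ l) (T.repaCost θ (l + μ)) m.2 γ hγ0
                (aux_repa_det T θ l μ hμconf m.2)
                (fun e he => by rw [aux_repa_out T θ l μ m.2 e, hmuOut_ne m.2 htvu e he, sub_zero])
                (fun e he => by
                  rw [aux_repa_inn T θ l μ m.2 e]
                  have := hmuInn_geγ m.2 e he
                  linarith)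
              linarith
            · rw [if_neg hat]
              have hb := aux_target_bound T (T.repaCost θ l) (T.repaCost θ (l + μ)) a 0 le_rfl
                (aux_repa_det T θ l μ hμconf a)
                (fun e he => by rw [aux_repa_out T θ l μ a e, hmuOut_ne a hau e he, sub_zero])
                (fun e he => by
                  rw [aux_repa_inn T θ l μ a e]
                  have h0' : ({e} : Finset (Edge Vdet)) ≠ xO := by
                    rw [hxOeq]
                    intro hcontr
                    have he' : e = Sum.inl m := by simpa using hcontr
                    subst he'
                    exact hat (((aux_inl_mem_In T).mp he).2).symm
                  have := hmuInn_ge0 a e he h0'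
                  linarith)
              linarith
        have hs := Finset.sum_le_sum hpoint
        rw [Finset.sum_add_distrib, Finset.sum_add_distrib,
          Finset.sum_ite_eq' Finset.univ u, Finset.sum_ite_eq' Finset.univ m.2] at hs
        simp only [Finset.mem_univ, if_true] at hs
        linarith
      · -- a division edge `u → (dvw.2.1, dvw.2.2)`
        obtain ⟨hdE, hd1⟩ := (aux_inr_mem_Out T).mp hestar
        obtain ⟨hne1, hne2, hne3⟩ := T.div_ne dvw hdE
        have htvu : dvw.2.1 ≠ u := fun h => hne1 (hd1.trans h.symm)
        have htwu : dvw.2.2 ≠ u := fun h => hne2 (hd1.trans h.symm)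
        have hmuInn_half : ∀ a : Vdet, ∀ e ∈ T.In a, γ / 2 ≤ muInn μ a e := by
          intro a e he
          cases e with
          | inl m =>
              simp only [muInn]
              rw [hμmove m]
              split_ifs with h
              · have := hδ0 _ h (by rw [hxOeq]; simp)
                linarith
              · linarith
          | inr d =>
              simp only [muInn]
              by_cases hmem : Sum.inr d ∈ T.Out u
              · rw [hμdiv d, if_pos hmem]
                have hδ := hδγ _ hmem
                obtain ⟨-, -, hdd⟩ := T.div_ne d ((aux_inr_mem_Out T).mp hmem).1
                dsimp only
                split_ifs with h1 h2 h2
                · exact absurd (h1.trans h2.symm) hdd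
                · linarith
                · linarith
                · linarith
              · rw [hμdiv d, if_neg hmem]
                have hg2 : γ/2 ≤ (0:ℝ) := by linarith
                simpa using hg2
        have hpoint : ∀ a ∈ Finset.univ, (T.XDet a).inf' (T.XDet_nonempty a)
              (detCost (T.repaCost θ l) a)
            + ((if a = u then -γ else 0) + (if a = dvw.2.1 then γ/2 else 0)
              + (if a = dvw.2.2 then γ/2 else 0))
            ≤ (T.XDet a).inf' (T.XDet_nonempty a) (detCost (T.repaCost θ (l + μ)) a) := by
          intro a _
          by_cases hau : a = u
          · rw [hau, if_pos rfl, if_neg (fun h : u = dvw.2.1 => htvu h.symm),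
              if_neg (fun h : u = dvw.2.2 => htwu h.symm)]
            linarith
          · rw [if_neg hau]
            by_cases hat1 : a = dvw.2.1
            · rw [if_pos hat1, if_neg (fun h : a = dvw.2.2 => hne3 (hat1.symm.trans h))]
              have hb := aux_target_bound T (T.repaCost θ l) (T.repaCost θ (l + μ)) a (γ/2)
                (by linarith)
                (aux_repa_det T θ l μ hμconf a)
                (fun e he => by rw [aux_repa_out T θ l μ a e, hmuOut_ne a hau e he, sub_zero])
                (fun e he => by
                  rw [aux_repa_inn T θ l μ a e]
                  have := hmuInn_half a e he
                  linarith)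
              linarith
            · rw [if_neg hat1]
              by_cases hat2 : a = dvw.2.2
              · rw [if_pos hat2]
                have hb := aux_target_bound T (T.repaCost θ l) (T.repaCost θ (l + μ)) a (γ/2)
                  (by linarith)
                  (aux_repa_det T θ l μ hμconf a)
                  (fun e he => by rw [aux_repa_out T θ l μ a e, hmuOut_ne a hau e he, sub_zero])
                  (fun e he => by
                    rw [aux_repa_inn T θ l μ a e]
                    have := hmuInn_half a e he
                    linarith)
                linarith
              · rw [if_neg hat2]
                have hb := aux_target_bound T (T.repaCost θ l) (T.repaCost θ (l + μ)) a 0 le_rfl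
                  (aux_repa_det T θ l μ hμconf a)
                  (fun e he => by rw [aux_repa_out T θ l μ a e, hmuOut_ne a hau e he, sub_zero])
                  (fun e he => by
                    rw [aux_repa_inn T θ l μ a e]
                    have h0' : ({e} : Finset (Edge Vdet)) ≠ xO := by
                      rw [hxOeq]
                      intro hcontr
                      have he' : e = Sum.inr dvw := by simpa using hcontr
                      subst he'
                      rcases ((aux_inr_mem_In T).mp he).2 with h | h
                      · exact hat1 h.symm
                      · exact hat2 h.symm
                    have := hmuInn_ge0 a e he h0'
                    linarith)
                linarith
        have hs := Finset.sum_le_sum hpoint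
        rw [Finset.sum_add_distrib, Finset.sum_add_distrib, Finset.sum_add_distrib,
          Finset.sum_ite_eq' Finset.univ u, Finset.sum_ite_eq' Finset.univ dvw.2.1,
          Finset.sum_ite_eq' Finset.univ dvw.2.2] at hs
        simp only [Finset.mem_univ, if_true] at hs
        linarith
  linarith
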